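/- Let R be an EM-ring and G a group. Then the group ring R[G], with its natural G-grading (R[G])_σ = R·σ, is an EM-G-graded ring. -/

import Mathlib

open Polynomial

/-- A commutative ring `S` is an EM-ring if every zero-divisor polynomial in `S[x]`
has an annihilating content. -/
def IsEMRing (S : Type*) [CommRing S] : Prop :=
  ∀ f : S[X], f ∉ nonZeroDivisors S[X] →
    ∃ (c : S) (g : S[X]), c ∉ nonZeroDivisors S ∧ g ∈ nonZeroDivisors S[X] ∧ f = C c * g

section Aux

variable {R : Type*} [CommRing R] {G : Type*} [CommGroup G]

/-- Extract the `τ`-component polynomial from a polynomial over the group ring. -/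
noncomputable def Tcomp (τ : G) (h : Polynomial (MonoidAlgebra R G)) : Polynomial R :=
  ⟨.ofCoeff (Finsupp.mapRange (fun x : MonoidAlgebra R G => x.coeff τ) rfl h.toFinsupp.coeff)⟩

lemma coeff_Tcomp (τ : G) (h : Polynomial (MonoidAlgebra R G)) (n : ℕ) :
    (Tcomp τ h).coeff n = (h.coeff n).coeff τ := by
  rcases h with ⟨h⟩
  rfl

lemma Tcomp_mul_map (τ : G) (h : Polynomial (MonoidAlgebra R G)) (p : R[X]) :
    Tcomp τ (h * p.map (MonoidAlgebra.singleOneRingHom)) = Tcomp τ h * p := by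
  ext n
  rw [coeff_Tcomp, Polynomial.coeff_mul, Polynomial.coeff_mul]
  rw [MonoidAlgebra.coeff_sum, Finsupp.finset_sum_apply]
  refine Finset.sum_congr rfl fun ij _ => ?_
  rw [Polynomial.coeff_map, coeff_Tcomp]
  simp [MonoidAlgebra.singleOneRingHom, MonoidAlgebra.mul_single_one_apply]

lemma eq_zero_of_Tcomp (h : Polynomial (MonoidAlgebra R G))
    (H : ∀ τ : G, Tcomp τ h = 0) : h = 0 := by
  ext n : 1
  rw [Polynomial.coeff_zero]
  refine MonoidAlgebra.coeff_injective (Finsupp.ext fun τ => ?_)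
  have := congrArg (fun q => Polynomial.coeff q n) (H τ)
  simpa [coeff_Tcomp] using this

end Aux

/-- If `R` is an EM-ring and `G` a (commutative) group, then the group ring
`R[G]` with its natural `G`-grading `(R[G])_σ = R·σ` is an EM-`G`-graded ring: every
nonzero zero-divisor polynomial over `R[G]` all of whose coefficients lie in a single
component `R·σ` has an annihilating content. -/
theorem stmt_7 {R : Type*} [CommRing R] (G : Type*) [CommGroup G] (hR : IsEMRing R) :
    ∀ f : Polynomial (MonoidAlgebra R G), f ≠ 0 →
      (∃ σ : G, ∀ i, ∃ a : R, f.coeff i = MonoidAlgebra.single σ a) →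
      f ∉ nonZeroDivisors (Polynomial (MonoidAlgebra R G)) →
      ∃ (c : MonoidAlgebra R G) (g : Polynomial (MonoidAlgebra R G)),
        c ∉ nonZeroDivisors (MonoidAlgebra R G) ∧
        g ∈ nonZeroDivisors (Polynomial (MonoidAlgebra R G)) ∧
        f = C c * g := by
  classical
  intro f hf0 ⟨σ, hσ⟩ hfzd
  set φ : R →+* MonoidAlgebra R G := MonoidAlgebra.singleOneRingHom
  set p : R[X] := Tcomp σ f with hp
  -- f = C (single σ 1) * map φ p
  have hfact : f = C (MonoidAlgebra.single σ 1) * p.map φ := by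
    ext n
    rw [Polynomial.coeff_C_mul, Polynomial.coeff_map, coeff_Tcomp]
    obtain ⟨a, ha⟩ := hσ n
    rw [ha]
    simp [φ, MonoidAlgebra.singleOneRingHom, MonoidAlgebra.single_mul_single]
  -- C (single σ 1) is a unit
  have hunit : IsUnit (C (MonoidAlgebra.single σ 1) :
      Polynomial (MonoidAlgebra R G)) := by
    refine isUnit_C.mpr ⟨⟨MonoidAlgebra.single σ 1, MonoidAlgebra.single σ⁻¹ 1, ?_, ?_⟩, rfl⟩
    · rw [MonoidAlgebra.single_mul_single]; simp [MonoidAlgebra.one_def]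
    · rw [MonoidAlgebra.single_mul_single]; simp [MonoidAlgebra.one_def]
  -- map φ p is a zero divisor
  have hmapzd : p.map φ ∉ nonZeroDivisors (Polynomial (MonoidAlgebra R G)) := by
    intro hmem
    exact hfzd (hfact ▸ mul_mem (hunit.mem_nonZeroDivisors) hmem)
  -- hence p is a zero divisor in R[X]
  have hpzd : p ∉ nonZeroDivisors R[X] := by
    intro hmem
    apply hmapzd
    rw [mem_nonZeroDivisors_iff_right]
    intro h hh
    apply eq_zero_of_Tcomp
    intro τ
    have := congrArg (Tcomp τ) hh
    rw [Tcomp_mul_map] at this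
    simpa using mem_nonZeroDivisors_iff_right.mp hmem _ this
  obtain ⟨c₀, g, hc₀, hg, hpg⟩ := hR p hpzd
  refine ⟨MonoidAlgebra.single σ c₀, g.map φ, ?_, ?_, ?_⟩
  · -- single σ c₀ is a zero divisor
    intro hmem
    rw [mem_nonZeroDivisors_iff_right] at hmem
    rw [mem_nonZeroDivisors_iff_right] at hc₀
    apply hc₀
    intro x hx
    have : MonoidAlgebra.single (1 : G) x * MonoidAlgebra.single σ c₀ = 0 := by
      rw [MonoidAlgebra.single_mul_single, hx]; simp
    have h0 := hmem _ this
    have := congrArg (fun q : MonoidAlgebra R G => q.coeff 1) h0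
    simpa using this
  · -- map φ g is regular
    rw [mem_nonZeroDivisors_iff_right]
    intro h hh
    apply eq_zero_of_Tcomp
    intro τ
    have := congrArg (Tcomp τ) hh
    rw [Tcomp_mul_map] at this
    simpa using mem_nonZeroDivisors_iff_right.mp hg _ this
  · rw [hfact, hpg, Polynomial.map_mul, Polynomial.map_C, ← mul_assoc, ← Polynomial.C_mul]
    congr 2
    simp [φ, MonoidAlgebra.singleOneRingHom, MonoidAlgebra.single_mul_single]
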